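/- Let X be a rack and x ∈ X such that the left multiplication L_x has finite order n as a permutation of X. Then g_x^n lies in the center of the enveloping group As(X). -/
import Mathlib


open Quandles

lemma envelGroup_conj_incl {X : Type*} [Rack X] (x y : X) :
    (Rack.toEnvelGroup X x : Rack.EnvelGroup X) * Rack.toEnvelGroup X y *
      (Rack.toEnvelGroup X x)⁻¹ = Rack.toEnvelGroup X (x ◃ y) :=
  ((Rack.toEnvelGroup X).map_act' (x := x) (y := y)).symm

lemma envelGroup_pow_conj_incl {X : Type*} [Rack X] (x : X) (k : ℕ) : ∀ y : X,
    (Rack.toEnvelGroup X x : Rack.EnvelGroup X) ^ k * Rack.toEnvelGroup X y *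
      ((Rack.toEnvelGroup X x) ^ k)⁻¹ =
      Rack.toEnvelGroup X (((Rack.act' x : Equiv.Perm X) ^ k) y) := by
  induction k with
  | zero => intro y; simp
  | succ k ih =>
      intro y
      rw [pow_succ', mul_inv_rev]
      have h1 : (Rack.toEnvelGroup X x : Rack.EnvelGroup X) * (Rack.toEnvelGroup X x) ^ k *
          Rack.toEnvelGroup X y * (((Rack.toEnvelGroup X x) ^ k)⁻¹ * (Rack.toEnvelGroup X x)⁻¹)
          = Rack.toEnvelGroup X x *
            ((Rack.toEnvelGroup X x : Rack.EnvelGroup X) ^ k * Rack.toEnvelGroup X y *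
              ((Rack.toEnvelGroup X x) ^ k)⁻¹) * (Rack.toEnvelGroup X x)⁻¹ := by group
      rw [h1, ih y, envelGroup_conj_incl]
      congr 1
      rw [pow_succ']
      rfl

/-- If the left multiplication `L_x` of a rack `X` has finite order `n`
(as a permutation of `X`), then `g_x ^ n` is central in the enveloping group `As(X)`. -/
theorem envelGroup_pow_mem_center (X : Type*) [Rack X] (x : X) (n : ℕ) (hn : 0 < n)
    (hord : orderOf (Rack.act' x : Equiv.Perm X) = n) :
    (Rack.toEnvelGroup X x : Rack.EnvelGroup X) ^ n ∈ Subgroup.center (Rack.EnvelGroup X) := by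
  rw [Subgroup.mem_center_iff]
  have hone : (Rack.act' x : Equiv.Perm X) ^ n = 1 := by
    rw [← hord]; exact pow_orderOf_eq_one _
  have key : ∀ y : X, (Rack.toEnvelGroup X y : Rack.EnvelGroup X) * (Rack.toEnvelGroup X x) ^ n
      = (Rack.toEnvelGroup X x) ^ n * Rack.toEnvelGroup X y := by
    intro y
    have h := envelGroup_pow_conj_incl x n y
    rw [hone] at h
    simp only [Equiv.Perm.coe_one, id_eq] at h
    calc (Rack.toEnvelGroup X y : Rack.EnvelGroup X) * (Rack.toEnvelGroup X x) ^ n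
        = ((Rack.toEnvelGroup X x : Rack.EnvelGroup X) ^ n * Rack.toEnvelGroup X y *
            ((Rack.toEnvelGroup X x) ^ n)⁻¹) * (Rack.toEnvelGroup X x) ^ n := by rw [h]
      _ = (Rack.toEnvelGroup X x) ^ n * Rack.toEnvelGroup X y := by group
  intro g
  induction g using Quotient.inductionOn with
  | h a =>
    induction a with
    | unit =>
        have h1 : (⟦Rack.PreEnvelGroup.unit⟧ : Rack.EnvelGroup X) = (1 : Rack.EnvelGroup X) := rfl
        rw [h1, one_mul, mul_one]
    | incl y => exact key y
    | mul a b iha ihb =>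
        set A : Rack.EnvelGroup X := ⟦a⟧ with hA
        set B : Rack.EnvelGroup X := ⟦b⟧ with hB
        have hm : (⟦a.mul b⟧ : Rack.EnvelGroup X) = A * B := rfl
        rw [hm, mul_assoc, ihb, ← mul_assoc, iha, mul_assoc]
    | inv a iha =>
        set A : Rack.EnvelGroup X := ⟦a⟧ with hA
        have hi : (⟦a.inv⟧ : Rack.EnvelGroup X) = A⁻¹ := rfl
        rw [hi, eq_mul_inv_iff_mul_eq, mul_assoc, ← iha, ← mul_assoc, inv_mul_cancel, one_mul]
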